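/- arXiv:2305.00745 — 4 statements merged into one kernel-verified Lean document; each statement's English description precedes it below -/
import Mathlib

section
/- For every T > 0 and d ≥ 1 there exists C > 0 such that for all 0 < t ≤ T: ( ∫_{ℝ^d} ξ_ℓ² · e^{-(t/4)(|ξ|² - 2)²} dξ )^{1/2} ≤ C · t^{-(d+2)/8}, for each coordinate ℓ ∈ {1,…,d}. -/
open Real MeasureTheory

private lemma aux_coord_sq_le {d : ℕ} (ξ : EuclideanSpace ℝ (Fin d)) (ℓ : Fin d) :
    (ξ ℓ) ^ 2 ≤ ‖ξ‖ ^ 2 := by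
  rw [PiLp.norm_sq_eq_of_L2]
  have h := Finset.single_le_sum (f := fun i => ‖ξ i‖ ^ 2)
    (fun i _ => by positivity) (Finset.mem_univ ℓ)
  simpa [Real.norm_eq_abs, sq_abs] using h

private lemma aux_self_le_exp_half (a : ℝ) (ha : 0 ≤ a) : a ≤ Real.exp (a / 2) := by
  have h1 := Real.add_one_le_exp (a / 4)
  have h2 : Real.exp (a / 2) = Real.exp (a / 4) * Real.exp (a / 4) := by
    rw [← Real.exp_add]; ring_nf
  nlinarith [sq_nonneg (a / 4 - 1), Real.exp_pos (a / 4)]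

private lemma aux_integrable_g {d : ℕ} :
    Integrable (fun ξ : EuclideanSpace ℝ (Fin d) =>
      ‖ξ‖ ^ 2 * Real.exp (-(1/8) * ‖ξ‖ ^ 4)) := by
  have hbase : Integrable (fun ξ : EuclideanSpace ℝ (Fin d) =>
      Real.exp (-(1/2) * ‖ξ‖ ^ 2)) := by
    have h := GaussianFourier.integrable_cexp_neg_mul_sq_norm_add
      (V := EuclideanSpace ℝ (Fin d)) (b := (1/2 : ℂ)) (by norm_num) 0 0
    have := h.norm
    refine this.congr' ?_ ?_
    · exact (Continuous.aestronglyMeasurable (by fun_prop))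
    · filter_upwards with v
      rw [norm_norm, Complex.norm_exp, Real.norm_eq_abs,
        abs_of_pos (Real.exp_pos _)]
      norm_num [← Complex.ofReal_pow]
  refine (hbase.const_mul (Real.exp 2)).mono'
    (Continuous.aestronglyMeasurable (by fun_prop)) ?_
  filter_upwards with ξ
  set a : ℝ := ‖ξ‖ ^ 2 with ha_def
  have ha : 0 ≤ a := by positivity
  have key : a * Real.exp (-(1/8) * a ^ 2) ≤ Real.exp 2 * Real.exp (-(1/2) * a) := by
    have h1 : Real.exp (-(1/8) * a ^ 2) ≤ Real.exp 2 * Real.exp (-a) := by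
      rw [← Real.exp_add]
      apply Real.exp_le_exp.2
      nlinarith [sq_nonneg (a - 4)]
    have h2 : a * Real.exp (-a) ≤ Real.exp (-(1/2) * a) := by
      have e1 : Real.exp (-a) = Real.exp (-(1/2) * a) * Real.exp (-(1/2) * a) := by
        rw [← Real.exp_add]; ring_nf
      have e2 : a * Real.exp (-(1/2) * a) ≤ 1 := by
        have := aux_self_le_exp_half a ha
        have h3 : Real.exp (-(1/2) * a) = (Real.exp (a / 2))⁻¹ := by
          rw [← Real.exp_neg]; ring_nf
        rw [h3]
        rw [mul_inv_le_iff₀ (Real.exp_pos _), one_mul]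
        linarith
      calc a * Real.exp (-a) = (a * Real.exp (-(1/2) * a)) * Real.exp (-(1/2) * a) := by
            rw [e1]; ring
        _ ≤ 1 * Real.exp (-(1/2) * a) := by
            apply mul_le_mul_of_nonneg_right e2 (Real.exp_pos _).le
        _ = Real.exp (-(1/2) * a) := one_mul _
    calc a * Real.exp (-(1/8) * a ^ 2) ≤ a * (Real.exp 2 * Real.exp (-a)) :=
          mul_le_mul_of_nonneg_left h1 ha
      _ = Real.exp 2 * (a * Real.exp (-a)) := by ring
      _ ≤ Real.exp 2 * Real.exp (-(1/2) * a) :=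
          mul_le_mul_of_nonneg_left h2 (Real.exp_pos _).le
  have h4 : ‖ξ‖ ^ 4 = a ^ 2 := by rw [ha_def]; ring
  rw [Real.norm_eq_abs, abs_of_nonneg (by positivity), h4]
  exact key

/-- L² norm estimate: for every `T > 0` and `d ≥ 1` there is `C > 0` such that for all
`0 < t ≤ T` and each coordinate `ℓ`,
`( ∫_{ℝ^d} ξ_ℓ² e^{-(t/4)(|ξ|²-2)²} dξ )^{1/2} ≤ C t^{-(d+2)/8}`. -/
theorem stmt4 (d : ℕ) (hd : 1 ≤ d) (T : ℝ) (hT : 0 < T) :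
    ∃ C > (0:ℝ), ∀ t ∈ Set.Ioc (0:ℝ) T, ∀ ℓ : Fin d,
      Real.sqrt (∫ ξ : EuclideanSpace ℝ (Fin d),
          (ξ ℓ) ^ 2 * Real.exp (-(t / 4) * (‖ξ‖ ^ 2 - 2) ^ 2))
        ≤ C * t ^ (-(((d : ℝ) + 2) / 8)) := by
  classical
  set g : EuclideanSpace ℝ (Fin d) → ℝ :=
    fun ξ => ‖ξ‖ ^ 2 * Real.exp (-(1/8) * ‖ξ‖ ^ 4) with hg_def
  set J : ℝ := ∫ ξ : EuclideanSpace ℝ (Fin d), g ξ with hJ_def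
  have hJ0 : 0 ≤ J := integral_nonneg fun ξ => by positivity
  refine ⟨Real.sqrt (Real.exp T * J) + 1, by positivity, ?_⟩
  intro t ht ℓ
  obtain ⟨ht0, htT⟩ := ht
  set c : ℝ := t ^ ((1:ℝ)/4) with hc_def
  have hc0 : 0 < c := Real.rpow_pos_of_pos ht0 _
  have hc2 : c ^ 2 = t ^ ((1:ℝ)/2) := by
    rw [hc_def, ← Real.rpow_natCast (t ^ ((1:ℝ)/4)) 2, ← Real.rpow_mul ht0.le]
    norm_num
  have hc4 : c ^ 4 = t := by
    rw [hc_def, ← Real.rpow_natCast (t ^ ((1:ℝ)/4)) 4, ← Real.rpow_mul ht0.le]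
    norm_num
  -- g (c • ξ) = t^(1/2) * (‖ξ‖² exp(-(t/8)‖ξ‖⁴))
  have hgc : ∀ ξ : EuclideanSpace ℝ (Fin d),
      g (c • ξ) = t ^ ((1:ℝ)/2) * (‖ξ‖ ^ 2 * Real.exp (-(t/8) * ‖ξ‖ ^ 4)) := by
    intro ξ
    have hn : ‖c • ξ‖ = c * ‖ξ‖ := by
      rw [norm_smul, Real.norm_eq_abs, abs_of_pos hc0]
    rw [hg_def]
    simp only [hn]
    rw [show (c * ‖ξ‖) ^ 2 = c ^ 2 * ‖ξ‖ ^ 2 by ring,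
      show -(1/8 : ℝ) * (c * ‖ξ‖) ^ 4 = -((c ^ 4)/8) * ‖ξ‖ ^ 4 by ring, hc2, hc4]
    ring
  -- scaling identity
  have hscale : ∫ ξ : EuclideanSpace ℝ (Fin d), g (c • ξ)
      = t ^ (-((d:ℝ)/4)) * J := by
    rw [MeasureTheory.Measure.integral_comp_smul volume g c]
    have hfr : Module.finrank ℝ (EuclideanSpace ℝ (Fin d)) = d := finrank_euclideanSpace_fin
    rw [hfr]
    have hcd : c ^ d = t ^ ((d:ℝ)/4) := by
      rw [hc_def, ← Real.rpow_natCast (t ^ ((1:ℝ)/4)) d, ← Real.rpow_mul ht0.le]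
      congr 1; ring
    rw [hcd, abs_of_pos (by positivity), ← Real.rpow_neg ht0.le, smul_eq_mul, hJ_def]
  have hIg : Integrable g := aux_integrable_g
  have hIcomp : Integrable (fun ξ : EuclideanSpace ℝ (Fin d) => g (c • ξ)) :=
    hIg.comp_smul hc0.ne'
  -- majorant
  have hmaj : Integrable (fun ξ : EuclideanSpace ℝ (Fin d) =>
      Real.exp T * (t ^ (-((1:ℝ)/2)) * g (c • ξ))) :=
    (hIcomp.const_mul _).const_mul _
  -- pointwise bound
  have hpt : ∀ ξ : EuclideanSpace ℝ (Fin d),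
      (ξ ℓ) ^ 2 * Real.exp (-(t / 4) * (‖ξ‖ ^ 2 - 2) ^ 2)
        ≤ Real.exp T * (t ^ (-((1:ℝ)/2)) * g (c • ξ)) := by
    intro ξ
    have h1 : t ^ (-((1:ℝ)/2)) * g (c • ξ) = ‖ξ‖ ^ 2 * Real.exp (-(t/8) * ‖ξ‖ ^ 4) := by
      rw [hgc ξ, ← mul_assoc, ← Real.rpow_add ht0]
      norm_num
    rw [h1]
    set a : ℝ := ‖ξ‖ ^ 2 with ha_def
    have ha : 0 ≤ a := by positivity
    have h4 : ‖ξ‖ ^ 4 = a ^ 2 := by rw [ha_def]; ring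
    rw [h4]
    have hexp : Real.exp (-(t / 4) * (a - 2) ^ 2)
        ≤ Real.exp T * Real.exp (-(t/8) * a ^ 2) := by
      rw [← Real.exp_add]
      apply Real.exp_le_exp.2
      nlinarith [sq_nonneg (a - 4), mul_nonneg ht0.le (sq_nonneg (a - 4))]
    calc (ξ ℓ) ^ 2 * Real.exp (-(t / 4) * (a - 2) ^ 2)
        ≤ a * (Real.exp T * Real.exp (-(t/8) * a ^ 2)) := by
          apply mul_le_mul (aux_coord_sq_le ξ ℓ) hexp (Real.exp_pos _).le ha
      _ = Real.exp T * (a * Real.exp (-(t/8) * a ^ 2)) := by ring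
  -- integral bound
  have hint : (∫ ξ : EuclideanSpace ℝ (Fin d),
      (ξ ℓ) ^ 2 * Real.exp (-(t / 4) * (‖ξ‖ ^ 2 - 2) ^ 2))
      ≤ (Real.exp T * J) * t ^ (-(((d:ℝ) + 2) / 4)) := by
    have hle := integral_mono_of_nonneg
      (f := fun ξ : EuclideanSpace ℝ (Fin d) =>
        (ξ ℓ) ^ 2 * Real.exp (-(t / 4) * (‖ξ‖ ^ 2 - 2) ^ 2))
      (g := fun ξ : EuclideanSpace ℝ (Fin d) =>
        Real.exp T * (t ^ (-((1:ℝ)/2)) * g (c • ξ)))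
      (Filter.Eventually.of_forall fun ξ => by positivity)
      hmaj (Filter.Eventually.of_forall hpt)
    refine hle.trans_eq ?_
    rw [integral_const_mul, integral_const_mul, hscale]
    rw [show Real.exp T * (t ^ (-((1:ℝ)/2)) * (t ^ (-((d:ℝ)/4)) * J))
      = (Real.exp T * J) * (t ^ (-((1:ℝ)/2)) * t ^ (-((d:ℝ)/4))) by ring,
      ← Real.rpow_add ht0]
    congr 2
    ring
  -- take square roots
  have hsq : Real.sqrt (∫ ξ : EuclideanSpace ℝ (Fin d),
      (ξ ℓ) ^ 2 * Real.exp (-(t / 4) * (‖ξ‖ ^ 2 - 2) ^ 2))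
      ≤ Real.sqrt (Real.exp T * J) * t ^ (-(((d:ℝ) + 2) / 8)) := by
    refine (Real.sqrt_le_sqrt hint).trans_eq ?_
    rw [Real.sqrt_mul (by positivity), Real.sqrt_eq_rpow (t ^ _),
      ← Real.rpow_mul ht0.le]
    congr 2
    ring
  have hrp : 0 < t ^ (-(((d:ℝ) + 2) / 8)) := Real.rpow_pos_of_pos ht0 _
  calc Real.sqrt _ ≤ Real.sqrt (Real.exp T * J) * t ^ (-(((d:ℝ) + 2) / 8)) := hsq
    _ ≤ (Real.sqrt (Real.exp T * J) + 1) * t ^ (-(((d:ℝ) + 2) / 8)) := by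
        apply mul_le_mul_of_nonneg_right _ hrp.le
        linarith
end

section
/- Let d ≥ 1, c₅, c₆ > 0, T > 0, and 1 < q < (d+2)/(d+1). Then there exists C > 0 such that for all 0 < t ≤ T: ( ∫_{ℝ^d} | ∫₀^∞ s^{-(d+1)/2} e^{-c₅|x|²/s} γ_t(ds) |^q dx )^{1/q} ≤ C · t^{-(d(q-1)+q)/(4q)}, where γ_t(ds) = e^{-c₆ s²/t} / √(π t/(4c₆)) ds is the half-Gaussian probability measure on (0,∞). -/
open Real MeasureTheory Set
open scoped ENNReal NNReal

/-- If `f` is a.e. nonnegative, `ENNReal.ofReal` of its integral is at most its lintegral. -/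
lemma stmt5_ofReal_integral_le {X : Type*} [MeasurableSpace X] (μ : Measure X) (f : X → ℝ)
    (hnn : 0 ≤ᵐ[μ] f) : ENNReal.ofReal (∫ x, f x ∂μ) ≤ ∫⁻ x, ENNReal.ofReal (f x) ∂μ := by
  by_cases hi : Integrable f μ
  · exact le_of_eq (ofReal_integral_eq_lintegral_ofReal hi hnn)
  · rw [integral_undef hi]; simp

/-- Jensen's inequality for power functions via Hölder, in `ℝ≥0∞`. -/
lemma stmt5_hoelder_jensen {X : Type*} [MeasurableSpace X] (μ : Measure X) (f w : X → ℝ≥0∞)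
    {q : ℝ} (hq1 : 1 < q) (hf : AEMeasurable f μ) (hw : AEMeasurable w μ)
    (hw0 : ∀ x, w x ≠ 0) (hwtop : ∀ x, w x ≠ ⊤) (hw1 : ∫⁻ x, w x ∂μ = 1) :
    (∫⁻ x, f x * w x ∂μ) ^ q ≤ ∫⁻ x, f x ^ q * w x ∂μ := by
  have hq0 : (0:ℝ) < q := lt_trans one_pos hq1
  have hq1' : q - 1 ≠ 0 := sub_ne_zero.2 (ne_of_gt hq1)
  have hpq : q.HolderConjugate (q/(q-1)) := Real.holderConjugate_iff.2 ⟨hq1, by rw [inv_div]; field_simp; ring⟩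
  have key := ENNReal.lintegral_mul_le_Lp_mul_Lq μ hpq
    (f := fun x => f x * w x ^ (1/q)) (g := fun x => w x ^ (1/(q/(q-1))))
    (hf.mul (hw.pow_const _)) (hw.pow_const _)
  simp only [Pi.mul_apply] at key
  have e1 : ∀ x, f x * w x ^ (1/q) * w x ^ (1/(q/(q-1))) = f x * w x := by
    intro x
    rw [mul_assoc, ← ENNReal.rpow_add _ _ (hw0 x) (hwtop x),
      show 1/q + 1/(q/(q-1)) = q⁻¹ + (q/(q-1))⁻¹ by rw [one_div, one_div],
      hpq.inv_add_inv_eq_one, ENNReal.rpow_one]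
  have e2 : ∀ x, (f x * w x ^ (1/q)) ^ q = f x ^ q * w x := by
    intro x
    rw [ENNReal.mul_rpow_of_nonneg _ _ hq0.le, ← ENNReal.rpow_mul,
      one_div_mul_cancel hq0.ne', ENNReal.rpow_one]
  have e3 : ∀ x, (w x ^ (1/(q/(q-1)))) ^ (q/(q-1)) = w x := by
    intro x
    rw [← ENNReal.rpow_mul, one_div_mul_cancel hpq.symm.ne_zero, ENNReal.rpow_one]
  rw [lintegral_congr e1, lintegral_congr e2, lintegral_congr e3, hw1, ENNReal.one_rpow,
    mul_one] at key
  calc (∫⁻ x, f x * w x ∂μ) ^ q ≤ ((∫⁻ x, f x ^ q * w x ∂μ) ^ (1/q)) ^ q :=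
        ENNReal.rpow_le_rpow key hq0.le
    _ = ∫⁻ x, f x ^ q * w x ∂μ := by
        rw [← ENNReal.rpow_mul, one_div_mul_cancel hq0.ne', ENNReal.rpow_one]

/-- The real Gaussian is integrable on a Euclidean space. -/
lemma stmt5_gauss_integrable (d : ℕ) {b : ℝ} (hb : 0 < b) :
    Integrable (fun v : EuclideanSpace ℝ (Fin d) => Real.exp (-b * ‖v‖^2)) := by
  have h := (GaussianFourier.integrable_cexp_neg_mul_sq_norm_add
      (V := EuclideanSpace ℝ (Fin d)) (b := (b:ℂ)) (by simpa using hb) 0 0).norm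
  simpa [Complex.norm_exp, ← Complex.ofReal_pow] using h

/-- Lintegral of the real Gaussian over a Euclidean space. -/
lemma stmt5_gauss_lintegral (d : ℕ) {b : ℝ} (hb : 0 < b) :
    ∫⁻ x : EuclideanSpace ℝ (Fin d), ENNReal.ofReal (Real.exp (-b * ‖x‖^2))
      = ENNReal.ofReal ((π/b) ^ ((d:ℝ)/2)) := by
  rw [← ofReal_integral_eq_lintegral_ofReal (stmt5_gauss_integrable d hb)
      (Filter.Eventually.of_forall fun x => Real.exp_nonneg _),
    GaussianFourier.integral_rexp_neg_mul_sq_norm hb, finrank_euclideanSpace_fin]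

/-- Normalization of the half-Gaussian. -/
lemma stmt5_half_gauss {c₆ t : ℝ} (hc₆ : 0 < c₆) (ht : 0 < t) :
    ∫ s in Ioi (0:ℝ), Real.exp (-(c₆/t) * s^2) = Real.sqrt (π*t/(4*c₆)) := by
  rw [integral_gaussian_Ioi, show π/(c₆/t) = π*t/c₆ by field_simp,
    show π*t/(4*c₆) = (π*t/c₆)/4 by ring, Real.sqrt_div (by positivity) 4,
    show (4:ℝ) = 2^2 by norm_num, Real.sqrt_sq (by norm_num : (0:ℝ) ≤ 2)]

/-- Scaling of the Gaussian moment. -/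
lemma stmt5_moment {c₆ t α : ℝ} (hc₆ : 0 < c₆) (ht : 0 < t) :
    ∫ s in Ioi (0:ℝ), s ^ (-α) * Real.exp (-(c₆/t) * s^2)
      = Real.sqrt t * (Real.sqrt t ^ (-α) * ∫ u in Ioi (0:ℝ), u ^ (-α) * Real.exp (-c₆ * u^2)) := by
  have hst : 0 < Real.sqrt t := Real.sqrt_pos.2 ht
  have h := integral_comp_mul_left_Ioi
    (fun y => y ^ (-α) * Real.exp (-(c₆/t) * y^2)) 0 hst
  rw [mul_zero] at h
  have h2 : ∀ x ∈ Ioi (0:ℝ), (Real.sqrt t * x) ^ (-α) * Real.exp (-(c₆/t) * (Real.sqrt t * x)^2)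
      = Real.sqrt t ^ (-α) * (x ^ (-α) * Real.exp (-c₆ * x^2)) := by
    intro x hx
    rw [Real.mul_rpow (Real.sqrt_nonneg t) (le_of_lt hx), mul_pow, Real.sq_sqrt ht.le,
      show -(c₆/t) * (t * x^2) = -c₆ * x^2 by field_simp]
    ring
  rw [setIntegral_congr_fun measurableSet_Ioi h2, integral_const_mul, smul_eq_mul] at h
  calc ∫ s in Ioi (0:ℝ), s ^ (-α) * Real.exp (-(c₆/t) * s^2)
      = Real.sqrt t * ((Real.sqrt t)⁻¹ * ∫ s in Ioi (0:ℝ), s ^ (-α) * Real.exp (-(c₆/t) * s^2)) := by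
        field_simp
    _ = _ := by rw [← h]

/-- Jensen-route `L^q` estimate of the subordinated kernel, valid for
`1 < q < (d+2)/(d+1)`. -/
theorem stmt5 (d : ℕ) (hd : 1 ≤ d) (c₅ c₆ T q : ℝ) (hc₅ : 0 < c₅) (hc₆ : 0 < c₆)
    (hT : 0 < T) (hq1 : 1 < q) (hq2 : q < ((d : ℝ) + 2) / ((d : ℝ) + 1)) :
    ∃ C > (0:ℝ), ∀ t ∈ Set.Ioc (0:ℝ) T,
      (∫ x : EuclideanSpace ℝ (Fin d),
          |∫ s in Set.Ioi (0:ℝ),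
              s ^ (-(((d : ℝ) + 1) / 2)) * Real.exp (-c₅ * ‖x‖ ^ 2 / s) *
                (Real.exp (-c₆ * s ^ 2 / t) / Real.sqrt (Real.pi * t / (4 * c₆)))| ^ q) ^ (1 / q)
        ≤ C * t ^ (-(((d : ℝ) * (q - 1) + q) / (4 * q))) := by
  have hq0 : (0:ℝ) < q := lt_trans one_pos hq1
  have hd1 : (0:ℝ) < (d:ℝ) + 1 := by positivity
  have hαlt : q * ((d:ℝ)+1) < (d:ℝ)+2 := (lt_div_iff₀ hd1).1 hq2
  set α : ℝ := q * ((d:ℝ) + 1) / 2 - (d:ℝ) / 2 with hα_def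
  have hα1 : α < 1 := by rw [hα_def]; linarith
  have hαneg : (-1:ℝ) < -α := by linarith
  set Cd : ℝ := (π/(q*c₅)) ^ ((d:ℝ)/2) with hCd_def
  have hCd0 : 0 ≤ Cd := by rw [hCd_def]; positivity
  set J : ℝ := ∫ u in Ioi (0:ℝ), u ^ (-α) * Real.exp (-c₆ * u^2) with hJ_def
  have hJ0 : 0 ≤ J := setIntegral_nonneg measurableSet_Ioi fun u hu =>
    mul_nonneg (Real.rpow_nonneg (le_of_lt hu) _) (Real.exp_nonneg _)
  set C₀ : ℝ := Cd * J / Real.sqrt (π/(4*c₆)) with hC₀_def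
  have hC₀ : 0 ≤ C₀ := by
    rw [hC₀_def]
    exact div_nonneg (mul_nonneg hCd0 hJ0) (Real.sqrt_nonneg _)
  refine ⟨C₀ ^ (1/q) + 1, by positivity, ?_⟩
  rintro t ⟨ht, -⟩
  set N : ℝ := Real.sqrt (π * t / (4 * c₆)) with hN_def
  have hN : 0 < N := Real.sqrt_pos.2 (by positivity)
  set K : EuclideanSpace ℝ (Fin d) → ℝ → ℝ :=
    fun x s => s ^ (-(((d:ℝ)+1)/2)) * Real.exp (-c₅ * ‖x‖^2 / s) *
      (Real.exp (-c₆ * s^2/t) / N) with hK_def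
  show (∫ x : EuclideanSpace ℝ (Fin d), |∫ s in Ioi (0:ℝ), K x s| ^ q) ^ (1/q)
    ≤ (C₀ ^ (1/q) + 1) * t ^ (-(((d:ℝ)*(q-1)+q)/(4*q)))
  -- nonnegativity
  have hKnn : ∀ x, ∀ s ∈ Ioi (0:ℝ), 0 ≤ K x s := by
    intro x s hs
    have hs0 : (0:ℝ) < s := hs
    exact mul_nonneg (mul_nonneg (Real.rpow_nonneg hs0.le _) (Real.exp_nonneg _))
      (div_nonneg (Real.exp_nonneg _) hN.le)
  have hF_nonneg : ∀ x, 0 ≤ ∫ s in Ioi (0:ℝ), K x s := fun x =>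
    setIntegral_nonneg measurableSet_Ioi (hKnn x)
  -- measurability
  have hKmeas : Measurable (Function.uncurry K) := by
    rw [hK_def]; fun_prop
  have hFm : Measurable (fun x => ∫ s in Ioi (0:ℝ), K x s) :=
    hKmeas.stronglyMeasurable.integral_prod_right'.measurable
  -- the weight is a probability density
  have hw1 : ∫⁻ s in Ioi (0:ℝ), ENNReal.ofReal (Real.exp (-c₆ * s^2/t) / N) = 1 := by
    have hshape : ∀ s : ℝ, Real.exp (-c₆ * s^2/t) / N = Real.exp (-(c₆/t) * s^2) / N := by
      intro s; rw [show -c₆ * s^2/t = -(c₆/t) * s^2 by ring]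
    simp only [hshape]
    have hint : IntegrableOn (fun s : ℝ => Real.exp (-(c₆/t) * s^2) / N) (Ioi 0) :=
      ((integrable_exp_neg_mul_sq (div_pos hc₆ ht)).div_const N).integrableOn
    rw [← ofReal_integral_eq_lintegral_ofReal hint
      (Filter.Eventually.of_forall fun s => div_nonneg (Real.exp_nonneg _) hN.le),
      integral_div, stmt5_half_gauss hc₆ ht, ← hN_def, div_self hN.ne']
    exact ENNReal.ofReal_one
  -- Jensen per `x`
  have step1 : ∀ x, (ENNReal.ofReal (∫ s in Ioi (0:ℝ), K x s)) ^ q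
      ≤ ∫⁻ s in Ioi (0:ℝ),
          (ENNReal.ofReal (s ^ (-(((d:ℝ)+1)/2)) * Real.exp (-c₅ * ‖x‖^2 / s))) ^ q
            * ENNReal.ofReal (Real.exp (-c₆ * s^2/t) / N) := by
    intro x
    have ha : ENNReal.ofReal (∫ s in Ioi (0:ℝ), K x s)
        ≤ ∫⁻ s in Ioi (0:ℝ), ENNReal.ofReal (K x s) :=
      stmt5_ofReal_integral_le _ _ ((ae_restrict_iff' measurableSet_Ioi).2
        (Filter.Eventually.of_forall (hKnn x)))
    have hsplit : ∀ᵐ s ∂(volume.restrict (Ioi (0:ℝ))),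
        ENNReal.ofReal (K x s)
          = ENNReal.ofReal (s ^ (-(((d:ℝ)+1)/2)) * Real.exp (-c₅ * ‖x‖^2 / s))
              * ENNReal.ofReal (Real.exp (-c₆ * s^2/t) / N) := by
      refine (ae_restrict_iff' measurableSet_Ioi).2 (Filter.Eventually.of_forall fun s hs => ?_)
      have hs0 : (0:ℝ) < s := hs
      simp only [hK_def]
      exact ENNReal.ofReal_mul (mul_nonneg (Real.rpow_nonneg hs0.le _) (Real.exp_nonneg _))
    rw [lintegral_congr_ae hsplit] at ha
    refine le_trans (ENNReal.rpow_le_rpow ha hq0.le) ?_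
    refine stmt5_hoelder_jensen (volume.restrict (Ioi (0:ℝ)))
      (fun s => ENNReal.ofReal (s ^ (-(((d:ℝ)+1)/2)) * Real.exp (-c₅ * ‖x‖^2 / s)))
      (fun s => ENNReal.ofReal (Real.exp (-c₆ * s^2/t) / N)) hq1
      ?_ ?_ (fun s => ?_) (fun s => ENNReal.ofReal_ne_top) hw1
    · exact ((by fun_prop : Measurable fun s : ℝ =>
        s ^ (-(((d:ℝ)+1)/2)) * Real.exp (-c₅ * ‖x‖^2 / s)).ennreal_ofReal).aemeasurable
    · exact ((by fun_prop : Measurable fun s : ℝ =>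
        Real.exp (-c₆ * s^2/t) / N).ennreal_ofReal).aemeasurable
    · exact (ENNReal.ofReal_pos.2 (div_pos (Real.exp_pos _) hN)).ne'
  -- outer integral as a lintegral
  have houter : ∫ x : EuclideanSpace ℝ (Fin d), |∫ s in Ioi (0:ℝ), K x s| ^ q
      = (∫⁻ x, (ENNReal.ofReal (∫ s in Ioi (0:ℝ), K x s)) ^ q).toReal := by
    rw [integral_eq_lintegral_of_nonneg_ae
      (Filter.Eventually.of_forall fun x => Real.rpow_nonneg (abs_nonneg _) q)
      ((by fun_prop : Measurable fun x => |∫ s in Ioi (0:ℝ), K x s| ^ q).aestronglyMeasurable)]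
    congr 1
    refine lintegral_congr fun x => ?_
    rw [abs_of_nonneg (hF_nonneg x), ENNReal.ofReal_rpow_of_nonneg (hF_nonneg x) hq0.le]
  -- Tonelli
  have hswap : (∫⁻ x : EuclideanSpace ℝ (Fin d), ∫⁻ s in Ioi (0:ℝ),
        (ENNReal.ofReal (s ^ (-(((d:ℝ)+1)/2)) * Real.exp (-c₅ * ‖x‖^2 / s))) ^ q
          * ENNReal.ofReal (Real.exp (-c₆ * s^2/t) / N))
      = ∫⁻ s in Ioi (0:ℝ), (∫⁻ x : EuclideanSpace ℝ (Fin d),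
          (ENNReal.ofReal (s ^ (-(((d:ℝ)+1)/2)) * Real.exp (-c₅ * ‖x‖^2 / s))) ^ q)
          * ENNReal.ofReal (Real.exp (-c₆ * s^2/t) / N) := by
    rw [lintegral_lintegral_swap]
    · refine lintegral_congr fun s => ?_
      exact lintegral_mul_const _ (by fun_prop)
    · apply Measurable.aemeasurable
      fun_prop
  -- value of the inner Gaussian integral
  have hinner : ∀ s ∈ Ioi (0:ℝ),
      (∫⁻ x : EuclideanSpace ℝ (Fin d),
        (ENNReal.ofReal (s ^ (-(((d:ℝ)+1)/2)) * Real.exp (-c₅ * ‖x‖^2 / s))) ^ q)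
        = ENNReal.ofReal (Cd * s ^ (-α)) := by
    intro s hs
    have hs0 : (0:ℝ) < s := hs
    have hb : 0 < q * c₅ / s := by positivity
    have e : ∀ x : EuclideanSpace ℝ (Fin d),
        (ENNReal.ofReal (s ^ (-(((d:ℝ)+1)/2)) * Real.exp (-c₅ * ‖x‖^2 / s))) ^ q
          = ENNReal.ofReal (s ^ ((-(((d:ℝ)+1)/2)) * q))
              * ENNReal.ofReal (Real.exp (-(q * c₅ / s) * ‖x‖^2)) := by
      intro x
      rw [ENNReal.ofReal_rpow_of_nonneg
          (mul_nonneg (Real.rpow_nonneg hs0.le _) (Real.exp_nonneg _)) hq0.le,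
        Real.mul_rpow (Real.rpow_nonneg hs0.le _) (Real.exp_nonneg _),
        ← Real.rpow_mul hs0.le, ← Real.exp_mul,
        show -c₅ * ‖x‖^2 / s * q = -(q * c₅ / s) * ‖x‖^2 by ring,
        ENNReal.ofReal_mul (Real.rpow_nonneg hs0.le _)]
    rw [lintegral_congr e, lintegral_const_mul _ (by fun_prop), stmt5_gauss_lintegral d hb,
      ← ENNReal.ofReal_mul (Real.rpow_nonneg hs0.le _)]
    congr 1
    rw [show π/(q*c₅/s) = (π/(q*c₅)) * s by rw [div_div_eq_mul_div]; ring,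
      Real.mul_rpow (by positivity) hs0.le]
    calc s ^ ((-(((d:ℝ)+1)/2)) * q) * ((π/(q*c₅)) ^ ((d:ℝ)/2) * s ^ ((d:ℝ)/2))
        = (π/(q*c₅)) ^ ((d:ℝ)/2) * (s ^ ((-(((d:ℝ)+1)/2)) * q) * s ^ ((d:ℝ)/2)) := by ring
      _ = Cd * s ^ (-α) := by
          rw [← Real.rpow_add hs0,
            show (-(((d:ℝ)+1)/2)) * q + (d:ℝ)/2 = -α by rw [hα_def]; ring, hCd_def]
  -- the moment integral
  have hmom : (∫⁻ s in Ioi (0:ℝ), ENNReal.ofReal (Cd * s ^ (-α))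
        * ENNReal.ofReal (Real.exp (-c₆ * s^2/t) / N))
      = ENNReal.ofReal (C₀ * t ^ (-α/2)) := by
    have e : ∀ᵐ s ∂(volume : Measure ℝ), s ∈ Ioi (0:ℝ) →
        ENNReal.ofReal (Cd * s ^ (-α)) * ENNReal.ofReal (Real.exp (-c₆*s^2/t)/N)
          = ENNReal.ofReal ((Cd/N) * (s ^ (-α) * Real.exp (-(c₆/t) * s^2))) := by
      refine Filter.Eventually.of_forall fun s hs => ?_
      have hs0 : (0:ℝ) < s := hs
      rw [← ENNReal.ofReal_mul (mul_nonneg hCd0 (Real.rpow_nonneg hs0.le _))]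
      congr 1
      rw [show -c₆*s^2/t = -(c₆/t)*s^2 by ring]
      ring
    rw [setLIntegral_congr_fun_ae measurableSet_Ioi e]
    have hint : IntegrableOn (fun s : ℝ => (Cd/N) * (s ^ (-α) * Real.exp (-(c₆/t) * s^2)))
        (Ioi 0) :=
      (integrableOn_rpow_mul_exp_neg_mul_sq (div_pos hc₆ ht) hαneg).const_mul _
    rw [← ofReal_integral_eq_lintegral_ofReal hint
      ((ae_restrict_iff' measurableSet_Ioi).2 (Filter.Eventually.of_forall fun s hs =>
        mul_nonneg (div_nonneg hCd0 hN.le)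
          (mul_nonneg (Real.rpow_nonneg (le_of_lt hs) _) (Real.exp_nonneg _)))),
      integral_const_mul, stmt5_moment hc₆ ht, ← hJ_def]
    congr 1
    have h1 : N = Real.sqrt (π/(4*c₆)) * Real.sqrt t := by
      rw [hN_def, ← Real.sqrt_mul (by positivity) t]
      congr 1
      ring
    have h2 : Real.sqrt t ^ (-α) = t ^ (-α/2) := by
      rw [Real.sqrt_eq_rpow, ← Real.rpow_mul ht.le]
      congr 1
      ring
    have hst : 0 < Real.sqrt t := Real.sqrt_pos.2 ht
    have hsc : 0 < Real.sqrt (π/(4*c₆)) := Real.sqrt_pos.2 (by positivity)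
    rw [h1, h2, hC₀_def]
    field_simp
  -- put everything together
  have hbound : ∫ x : EuclideanSpace ℝ (Fin d), |∫ s in Ioi (0:ℝ), K x s| ^ q
      ≤ C₀ * t ^ (-α/2) := by
    rw [houter]
    refine ENNReal.toReal_le_of_le_ofReal
      (mul_nonneg hC₀ (Real.rpow_nonneg ht.le _)) ?_
    calc ∫⁻ x, (ENNReal.ofReal (∫ s in Ioi (0:ℝ), K x s)) ^ q
        ≤ ∫⁻ x : EuclideanSpace ℝ (Fin d), ∫⁻ s in Ioi (0:ℝ),
            (ENNReal.ofReal (s ^ (-(((d:ℝ)+1)/2)) * Real.exp (-c₅ * ‖x‖^2 / s))) ^ q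
              * ENNReal.ofReal (Real.exp (-c₆ * s^2/t) / N) := lintegral_mono step1
      _ = ∫⁻ s in Ioi (0:ℝ), (∫⁻ x : EuclideanSpace ℝ (Fin d),
            (ENNReal.ofReal (s ^ (-(((d:ℝ)+1)/2)) * Real.exp (-c₅ * ‖x‖^2 / s))) ^ q)
            * ENNReal.ofReal (Real.exp (-c₆ * s^2/t) / N) := hswap
      _ = ∫⁻ s in Ioi (0:ℝ), ENNReal.ofReal (Cd * s ^ (-α))
            * ENNReal.ofReal (Real.exp (-c₆ * s^2/t) / N) :=
          setLIntegral_congr_fun_ae measurableSet_Ioi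
            (Filter.Eventually.of_forall fun s hs => by rw [hinner s hs])
      _ = ENNReal.ofReal (C₀ * t ^ (-α/2)) := hmom
  calc (∫ x : EuclideanSpace ℝ (Fin d), |∫ s in Ioi (0:ℝ), K x s| ^ q) ^ (1/q)
      ≤ (C₀ * t ^ (-α/2)) ^ (1/q) :=
        Real.rpow_le_rpow (integral_nonneg fun x => Real.rpow_nonneg (abs_nonneg _) q)
          hbound (by positivity)
    _ = C₀ ^ (1/q) * t ^ ((-α/2) * (1/q)) := by
        rw [Real.mul_rpow hC₀ (Real.rpow_nonneg ht.le _), ← Real.rpow_mul ht.le]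
    _ ≤ (C₀ ^ (1/q) + 1) * t ^ (-(((d:ℝ)*(q-1)+q)/(4*q))) := by
        rw [show (-α/2) * (1/q) = -(((d:ℝ)*(q-1)+q)/(4*q)) by
          rw [hα_def]; field_simp; ring]
        exact mul_le_mul_of_nonneg_right (le_add_of_nonneg_right zero_le_one)
          (Real.rpow_nonneg ht.le _)
end

section
/- Let d ≥ 2, c₅, c₆ > 0, T > 0, and 1 < q < d/(d-1). Then there exists C > 0 such that for all 0 < t ≤ T: ( ∫_{ℝ^d} | ∫₀^∞ s^{-(d+1)/2} e^{-c₅|x|²/s} γ_t(ds) |^q dx )^{1/q} ≤ C · t^{-(d(q-1)+q)/(4q)}, where γ_t(ds) = e^{-c₆ s²/t}/√(π t/(4c₆)) ds. -/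
open Real MeasureTheory

open Set Function Metric MeasureTheory Real
open scoped ENNReal NNReal

local notation "dim" => Module.finrank ℝ

lemma aux_integrable_fun_norm {E : Type*} [NormedAddCommGroup E] [NormedSpace ℝ E]
    [MeasurableSpace E] [BorelSpace E] [FiniteDimensional ℝ E] [Nontrivial E]
    (μ : Measure E) [μ.IsAddHaarMeasure] {f : ℝ → ℝ} (hm : Measurable f)
    (hf : IntegrableOn (fun y => y ^ (dim E - 1) * f y) (Ioi (0:ℝ))) :
    Integrable (fun x => f ‖x‖) μ := by
  have hs : MeasurableSet ({(0:E)}ᶜ) := (measurableSet_singleton 0).compl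
  rw [← MeasureTheory.restrict_compl_singleton (μ := μ) (0:E), ← map_comap_subtype_coe hs,
    (MeasurableEmbedding.subtype_coe hs).integrable_map_iff]
  have key : Integrable ((fun p : sphere (0:E) 1 × Ioi (0:ℝ) => f p.2) ∘
      (homeomorphUnitSphereProd E)) (μ.comap Subtype.val) := by
    rw [μ.measurePreserving_homeomorphUnitSphereProd.integrable_comp_emb
      (Homeomorph.measurableEmbedding _)]
    have hν : Integrable (fun y : Ioi (0:ℝ) => f y) (Measure.volumeIoiPow (dim E - 1)) := by
      rw [Measure.volumeIoiPow,
        integrable_withDensity_iff_integrable_smul' (by fun_prop)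
          (Filter.Eventually.of_forall fun y => ENNReal.ofReal_lt_top)]
      have base : Integrable ((fun y : ℝ => y ^ (dim E - 1) * f y) ∘ (Subtype.val : Ioi (0:ℝ) → ℝ))
          (volume.comap Subtype.val) := by
        rw [← (MeasurableEmbedding.subtype_coe measurableSet_Ioi).integrable_map_iff,
          map_comap_subtype_coe measurableSet_Ioi]
        exact hf
      refine base.congr ?_
      refine Filter.Eventually.of_forall fun y => ?_
      simp only [Function.comp_apply, smul_eq_mul,
        ENNReal.toReal_ofReal (pow_nonneg (le_of_lt y.2) _)]
    have h1 : Integrable (fun y : Ioi (0:ℝ) => f y)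
        ((μ.toSphere univ) • (Measure.volumeIoiPow (dim E - 1))) :=
      hν.smul_measure (measure_ne_top _ _)
    rw [← Measure.map_snd_prod] at h1
    exact (integrable_map_measure
      (hm.comp measurable_subtype_coe).aestronglyMeasurable
      measurable_snd.aemeasurable).mp h1
  exact key.congr (Filter.Eventually.of_forall fun x => by simp [homeomorphUnitSphereProd])

lemma aux_exp_bound {κ u : ℝ} (hκ : 0 < κ) (hu : 0 < u) :
    Real.exp (-u) ≤ (κ / u) ^ κ := by
  have h1 : u / κ ≤ Real.exp (u / κ) := by
    have := Real.add_one_le_exp (u / κ); linarith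
  have h2 : (u / κ) ^ κ ≤ Real.exp u := by
    calc (u / κ) ^ κ ≤ (Real.exp (u / κ)) ^ κ :=
          Real.rpow_le_rpow (by positivity) h1 hκ.le
      _ = Real.exp u := by
          rw [← Real.exp_mul, div_mul_cancel₀ _ (ne_of_gt hκ)]
  have h3 : Real.exp (-u) = (Real.exp u)⁻¹ := by rw [Real.exp_neg]
  rw [h3]
  calc (Real.exp u)⁻¹ ≤ ((u / κ) ^ κ)⁻¹ := by
        apply inv_anti₀ (by positivity) h2
    _ = (κ / u) ^ κ := by
        rw [← Real.inv_rpow (by positivity), inv_div]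

lemma aux_ptwise (d : ℕ) {c₅ c₆ κ t r : ℝ} (hc₅ : 0 < c₅) (hc₆ : 0 < c₆)
    (hκ0 : 0 < κ) (hγ : -1 < κ - ((d:ℝ) + 1) / 2) (ht : 0 < t) (hr : 0 < r) :
    ∫ s in Ioi (0:ℝ), s ^ (-(((d : ℝ) + 1) / 2)) * Real.exp (-c₅ * r ^ 2 / s) *
        (Real.exp (-c₆ * s ^ 2 / t) / Real.sqrt (π * t / (4 * c₆)))
      ≤ ((κ / c₅) ^ κ * c₆ ^ (-(κ - ((d:ℝ) + 1) / 2 + 1) / 2) * (1 / 2) *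
          Real.Gamma ((κ - ((d:ℝ) + 1) / 2 + 1) / 2) * (2 * Real.sqrt c₆ / Real.sqrt π)) *
        t ^ ((κ - ((d:ℝ) + 1) / 2) / 2) * r ^ (-(2 * κ)) := by
  set α : ℝ := ((d:ℝ) + 1) / 2 with hα
  set γ : ℝ := κ - α with hγdef
  have hN : 0 < Real.sqrt (π * t / (4 * c₆)) := Real.sqrt_pos.mpr (by positivity)
  set N : ℝ := Real.sqrt (π * t / (4 * c₆)) with hNdef
  set A : ℝ := (κ / (c₅ * r ^ 2)) ^ κ with hAdef
  have hA0 : 0 < A := by positivity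
  have hb : 0 < c₆ / t := div_pos hc₆ ht
  -- step 1 : integral comparison
  have hDint : IntegrableOn (fun s : ℝ => (A / N) * (s ^ γ * Real.exp (-(c₆ / t) * s ^ 2)))
      (Ioi (0:ℝ)) := (integrableOn_rpow_mul_exp_neg_mul_sq hb hγ).const_mul _
  have step1 : ∫ s in Ioi (0:ℝ), s ^ (-α) * Real.exp (-c₅ * r ^ 2 / s) *
        (Real.exp (-c₆ * s ^ 2 / t) / N)
      ≤ ∫ s in Ioi (0:ℝ), (A / N) * (s ^ γ * Real.exp (-(c₆ / t) * s ^ 2)) := by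
    refine integral_mono_of_nonneg ?_ hDint ?_
    · refine (ae_restrict_iff' measurableSet_Ioi).mpr (Filter.Eventually.of_forall fun s hs => ?_)
      have hs' : (0:ℝ) < s := hs
      positivity
    · refine (ae_restrict_iff' measurableSet_Ioi).mpr (Filter.Eventually.of_forall fun s hs => ?_)
      have hs' : (0:ℝ) < s := hs
      have hexp : Real.exp (-c₅ * r ^ 2 / s) ≤ (κ / (c₅ * r ^ 2)) ^ κ * s ^ κ := by
        have h1 : Real.exp (-(c₅ * r ^ 2 / s)) ≤ (κ / (c₅ * r ^ 2 / s)) ^ κ :=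
          aux_exp_bound hκ0 (by positivity)
        calc Real.exp (-c₅ * r ^ 2 / s) = Real.exp (-(c₅ * r ^ 2 / s)) := by ring_nf
          _ ≤ (κ / (c₅ * r ^ 2 / s)) ^ κ := h1
          _ = (κ / (c₅ * r ^ 2) * s) ^ κ := by rw [div_div_eq_mul_div, div_mul_eq_mul_div,
                mul_div_assoc]
          _ = (κ / (c₅ * r ^ 2)) ^ κ * s ^ κ := Real.mul_rpow (by positivity) hs'.le
      have hss : s ^ (-α) * s ^ κ = s ^ γ := by
        rw [← Real.rpow_add hs']; congr 1; rw [hγdef]; ring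
      calc s ^ (-α) * Real.exp (-c₅ * r ^ 2 / s) * (Real.exp (-c₆ * s ^ 2 / t) / N)
          ≤ s ^ (-α) * ((κ / (c₅ * r ^ 2)) ^ κ * s ^ κ) * (Real.exp (-c₆ * s ^ 2 / t) / N) := by
            apply mul_le_mul_of_nonneg_right
              (mul_le_mul_of_nonneg_left hexp (Real.rpow_nonneg hs'.le _)) (by positivity)
        _ = (A / N) * (s ^ γ * Real.exp (-(c₆ / t) * s ^ 2)) := by
            rw [show -c₆ * s ^ 2 / t = -(c₆ / t) * s ^ 2 by ring, ← hss, hAdef]; ring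
  -- step 2 : compute the dominating integral
  have step2 : ∫ s in Ioi (0:ℝ), (A / N) * (s ^ γ * Real.exp (-(c₆ / t) * s ^ 2))
      = (A / N) * ((c₆ / t) ^ (-(γ + 1) / 2) * (1 / 2) * Real.Gamma ((γ + 1) / 2)) := by
    rw [MeasureTheory.integral_const_mul]
    congr 1
    rw [← integral_rpow_mul_exp_neg_mul_rpow two_pos hγ hb]
    refine setIntegral_congr_fun measurableSet_Ioi fun s hs => ?_
    have hs' : (0:ℝ) < s := hs
    rw [Real.rpow_two]
  refine (step1.trans (le_of_eq ?_))
  rw [step2]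
  -- step 3 : algebra
  have e1 : A = (κ / c₅) ^ κ * r ^ (-(2 * κ)) := by
    rw [hAdef, show κ / (c₅ * r ^ 2) = (κ / c₅) * (r ^ 2)⁻¹ by field_simp,
      Real.mul_rpow (by positivity) (by positivity),
      Real.inv_rpow (by positivity), ← Real.rpow_natCast r 2, ← Real.rpow_mul hr.le,
      ← Real.rpow_neg hr.le]
    norm_num
  have e2 : (c₆ / t) ^ (-(γ + 1) / 2) = c₆ ^ (-(γ + 1) / 2) * t ^ ((γ + 1) / 2) := by
    rw [Real.div_rpow hc₆.le ht.le, div_eq_mul_inv, ← Real.rpow_neg ht.le]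
    congr 1; ring
  have h4 : Real.sqrt 4 = 2 := by
    rw [show (4:ℝ) = 2 ^ 2 by norm_num, Real.sqrt_sq (by norm_num : (0:ℝ) ≤ 2)]
  have e3 : N = (Real.sqrt π / (2 * Real.sqrt c₆)) * t ^ ((1:ℝ) / 2) := by
    rw [hNdef, Real.sqrt_div (by positivity) (4 * c₆), Real.sqrt_mul pi_pos.le,
      Real.sqrt_mul (by norm_num : (0:ℝ) ≤ 4), h4, Real.sqrt_eq_rpow t]
    ring
  have ht2 : t ^ ((γ + 1) / 2) = t ^ (γ / 2) * t ^ ((1:ℝ) / 2) := by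
    rw [← Real.rpow_add ht]; congr 1; ring
  rw [e1, e2, e3, ht2]
  have h1 : Real.sqrt π > 0 := Real.sqrt_pos.mpr pi_pos
  have h2 : Real.sqrt c₆ > 0 := Real.sqrt_pos.mpr hc₆
  have h3 : (0:ℝ) < t ^ ((1:ℝ) / 2) := Real.rpow_pos_of_pos ht _
  field_simp

set_option maxHeartbeats 1000000 in
/-- Minkowski-route `L^q` estimate of the subordinated kernel, valid for `d ≥ 2` and
`1 < q < d/(d-1)`. -/
theorem stmt6 (d : ℕ) (hd : 2 ≤ d) (c₅ c₆ T q : ℝ) (hc₅ : 0 < c₅) (hc₆ : 0 < c₆)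
    (hT : 0 < T) (hq1 : 1 < q) (hq2 : q < (d : ℝ) / ((d : ℝ) - 1)) :
    ∃ C > (0:ℝ), ∀ t ∈ Set.Ioc (0:ℝ) T,
      (∫ x : EuclideanSpace ℝ (Fin d),
          |∫ s in Set.Ioi (0:ℝ),
              s ^ (-(((d : ℝ) + 1) / 2)) * Real.exp (-c₅ * ‖x‖ ^ 2 / s) *
                (Real.exp (-c₆ * s ^ 2 / t) / Real.sqrt (Real.pi * t / (4 * c₆)))| ^ q) ^ (1 / q)
        ≤ C * t ^ (-(((d : ℝ) * (q - 1) + q) / (4 * q))) := by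
  have hq0 : (0:ℝ) < q := by linarith
  have hd2 : (2:ℝ) ≤ (d:ℝ) := by exact_mod_cast hd
  haveI : Nontrivial (EuclideanSpace ℝ (Fin d)) := by
    refine Module.nontrivial_of_finrank_pos (R := ℝ) (M := EuclideanSpace ℝ (Fin d)) ?_
    rw [finrank_euclideanSpace_fin]; omega
  have hdim : Module.finrank ℝ (EuclideanSpace ℝ (Fin d)) = d := finrank_euclideanSpace_fin
  -- constants
  set α : ℝ := ((d:ℝ) + 1) / 2 with hαdef
  have hdq : ((d:ℝ) - 1) / 2 < (d:ℝ) / (2 * q) := by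
    rw [div_lt_div_iff₀ (by norm_num) (by positivity)]
    have h1 : (0:ℝ) < (d:ℝ) - 1 := by linarith
    have h2 : q * ((d:ℝ) - 1) < (d:ℝ) := by
      have := (lt_div_iff₀ h1).mp hq2; linarith
    nlinarith
  set κ₁ : ℝ := (((d:ℝ) - 1) / 2 + (d:ℝ) / (2 * q)) / 2 with hκ₁def
  have hκ₁a : ((d:ℝ) - 1) / 2 < κ₁ := by rw [hκ₁def]; linarith
  have hκ₁b : κ₁ < (d:ℝ) / (2 * q) := by rw [hκ₁def]; linarith
  have hκ₁0 : 0 < κ₁ := by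
    have : (0:ℝ) < ((d:ℝ) - 1) / 2 := by linarith
    linarith
  have hkd0 : 0 < ((d:ℝ)) := by linarith
  have hγ₁ : -1 < κ₁ - α := by rw [hαdef]; linarith
  have hγ₂ : -1 < ((d:ℝ)) - α := by rw [hαdef]; linarith
  set B₁ : ℝ := (κ₁ / c₅) ^ κ₁ * c₆ ^ (-(κ₁ - α + 1) / 2) * (1 / 2) *
      Real.Gamma ((κ₁ - α + 1) / 2) * (2 * Real.sqrt c₆ / Real.sqrt π) with hB₁def
  set B₂ : ℝ := (((d:ℝ)) / c₅) ^ ((d:ℝ)) * c₆ ^ (-(((d:ℝ)) - α + 1) / 2) * (1 / 2) *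
      Real.Gamma ((((d:ℝ)) - α + 1) / 2) * (2 * Real.sqrt c₆ / Real.sqrt π) with hB₂def
  have hB₁ : 0 < B₁ := by
    have := Real.Gamma_pos_of_pos (show 0 < (κ₁ - α + 1) / 2 by linarith)
    have h1 : (0:ℝ) < Real.sqrt c₆ := Real.sqrt_pos.mpr hc₆
    have h2 : (0:ℝ) < Real.sqrt π := Real.sqrt_pos.mpr pi_pos
    rw [hB₁def]; positivity
  have hB₂ : 0 < B₂ := by
    have := Real.Gamma_pos_of_pos (show 0 < (((d:ℝ)) - α + 1) / 2 by linarith)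
    have h1 : (0:ℝ) < Real.sqrt c₆ := Real.sqrt_pos.mpr hc₆
    have h2 : (0:ℝ) < Real.sqrt π := Real.sqrt_pos.mpr pi_pos
    rw [hB₂def]; positivity
  -- exponents in the radial integral
  set a₁ : ℝ := ((d:ℝ) - 1) + (-(2 * κ₁) * q) with ha₁def
  set a₂ : ℝ := ((d:ℝ) - 1) + (-(2 * ((d:ℝ))) * q) with ha₂def
  have ha₁ : -1 < a₁ := by
    rw [ha₁def]
    have : 2 * κ₁ * q < (d:ℝ) := by
      have := (lt_div_iff₀ (by positivity : (0:ℝ) < 2 * q)).mp hκ₁b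
      nlinarith
    nlinarith
  have ha₂ : a₂ < -1 := by
    rw [ha₂def]; nlinarith
  set vol : ℝ := (volume (Metric.ball (0:EuclideanSpace ℝ (Fin d)) 1)).toReal with hvoldef
  have hvol : 0 ≤ vol := ENNReal.toReal_nonneg
  set K : ℝ := (d:ℝ) * vol * (B₁ ^ q / (a₁ + 1) + B₂ ^ q / (-(a₂ + 1))) with hKdef
  have hK : 0 ≤ K := by
    have h1 : 0 < a₁ + 1 := by linarith
    have h2 : 0 < -(a₂ + 1) := by linarith
    rw [hKdef]
    have hb1 : 0 ≤ B₁ ^ q := Real.rpow_nonneg hB₁.le q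
    have hb2 : 0 ≤ B₂ ^ q := Real.rpow_nonneg hB₂.le q
    positivity
  refine ⟨K ^ (1/q) + 1, by positivity, fun t ht => ?_⟩
  obtain ⟨ht0, htT⟩ := ht
  set R : ℝ := t ^ ((1:ℝ)/4) with hRdef
  have hR0 : 0 < R := Real.rpow_pos_of_pos ht0 _
  set C₁ : ℝ := (B₁ * t ^ ((κ₁ - α)/2)) ^ q with hC₁def
  set C₂ : ℝ := (B₂ * t ^ ((((d:ℝ)) - α)/2)) ^ q with hC₂def
  have htp1 : 0 < t ^ ((κ₁ - α)/2) := Real.rpow_pos_of_pos ht0 _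
  have htp2 : 0 < t ^ ((((d:ℝ)) - α)/2) := Real.rpow_pos_of_pos ht0 _
  have hC₁0 : 0 ≤ C₁ := Real.rpow_nonneg (by positivity) _
  have hC₂0 : 0 ≤ C₂ := Real.rpow_nonneg (by positivity) _
  set g : ℝ → ℝ := fun y => if y ≤ R then C₁ * y ^ (-(2*κ₁)*q) else C₂ * y ^ (-(2*((d:ℝ)))*q)
    with hgdef
  have hgmeas : Measurable g := by
    apply Measurable.ite (measurableSet_le measurable_id measurable_const)
    · fun_prop
    · fun_prop
  have hg1 : Set.EqOn (fun y : ℝ => y ^ (d - 1 : ℕ) * g y) (fun y => C₁ * y ^ a₁)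
      (Set.Ioc 0 R) := by
    intro y hy
    have hy0 : (0:ℝ) < y := hy.1
    simp only [hgdef, if_pos hy.2]
    rw [← Real.rpow_natCast y (d-1), Nat.cast_sub (by omega), Nat.cast_one, ha₁def,
      Real.rpow_add hy0]
    ring
  have hg2 : Set.EqOn (fun y : ℝ => y ^ (d - 1 : ℕ) * g y) (fun y => C₂ * y ^ a₂)
      (Set.Ioi R) := by
    intro y hy
    have hyR : ¬ (y ≤ R) := not_le.mpr hy
    have hy0 : (0:ℝ) < y := hR0.trans hy
    simp only [hgdef, if_neg hyR]
    rw [← Real.rpow_natCast y (d-1), Nat.cast_sub (by omega), Nat.cast_one, ha₂def,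
      Real.rpow_add hy0]
    ring
  have hint₁ : IntegrableOn (fun y : ℝ => C₁ * y ^ a₁) (Set.Ioc 0 R) :=
    ((intervalIntegral.intervalIntegrable_rpow' (a := 0) (b := R) ha₁).1).const_mul _
  have hint₂ : IntegrableOn (fun y : ℝ => C₂ * y ^ a₂) (Set.Ioi R) :=
    (integrableOn_Ioi_rpow_of_lt ha₂ hR0).const_mul _
  have hint₁' : IntegrableOn (fun y : ℝ => y ^ (d - 1 : ℕ) * g y) (Set.Ioc 0 R) :=
    hint₁.congr_fun hg1.symm measurableSet_Ioc
  have hint₂' : IntegrableOn (fun y : ℝ => y ^ (d - 1 : ℕ) * g y) (Set.Ioi R) :=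
    hint₂.congr_fun hg2.symm measurableSet_Ioi
  have hsplit : Set.Ioc (0:ℝ) R ∪ Set.Ioi R = Set.Ioi 0 := Set.Ioc_union_Ioi_eq_Ioi hR0.le
  have hgint : IntegrableOn (fun y : ℝ => y ^ (d - 1 : ℕ) * g y) (Set.Ioi 0) := by
    rw [← hsplit]
    exact hint₁'.union hint₂'
  have hval₁ : ∫ y in Set.Ioc (0:ℝ) R, C₁ * y ^ a₁ = C₁ * (R ^ (a₁+1) / (a₁+1)) := by
    rw [MeasureTheory.integral_const_mul, ← intervalIntegral.integral_of_le hR0.le,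
      integral_rpow (Or.inl ha₁), Real.zero_rpow (by linarith : a₁ + 1 ≠ 0)]
    ring
  have hval₂ : ∫ y in Set.Ioi R, C₂ * y ^ a₂ = C₂ * (R ^ (a₂+1) / (-(a₂+1))) := by
    rw [MeasureTheory.integral_const_mul, integral_Ioi_rpow_of_lt ha₂ hR0, neg_div, ← div_neg]
  have hval : ∫ y in Set.Ioi (0:ℝ), y ^ (d - 1 : ℕ) * g y
      = C₁ * (R ^ (a₁+1) / (a₁+1)) + C₂ * (R ^ (a₂+1) / (-(a₂+1))) := by
    rw [← hsplit, MeasureTheory.setIntegral_union (Set.Ioc_disjoint_Ioi le_rfl)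
      measurableSet_Ioi hint₁' hint₂',
      MeasureTheory.setIntegral_congr_fun measurableSet_Ioc hg1,
      MeasureTheory.setIntegral_congr_fun measurableSet_Ioi hg2, hval₁, hval₂]
  have hInt : Integrable (fun x : EuclideanSpace ℝ (Fin d) => g ‖x‖) := by
    refine aux_integrable_fun_norm volume hgmeas ?_
    rw [hdim]
    exact hgint
  set Etot : ℝ := (d:ℝ)/4 - q * α / 2 with hEtotdef
  -- a.e. pointwise bound
  have h0 : (volume : Measure (EuclideanSpace ℝ (Fin d))) {0} = 0 := measure_singleton _
  have haene : ∀ᵐ x : EuclideanSpace ℝ (Fin d), x ≠ 0 := by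
    rw [MeasureTheory.ae_iff]
    simpa using h0
  have hae : ∀ᵐ x : EuclideanSpace ℝ (Fin d),
      |∫ s in Set.Ioi (0:ℝ),
          s ^ (-α) * Real.exp (-c₅ * ‖x‖ ^ 2 / s) *
            (Real.exp (-c₆ * s ^ 2 / t) / Real.sqrt (π * t / (4 * c₆)))| ^ q ≤ g ‖x‖ := by
    filter_upwards [haene] with x hx
    have hr : 0 < ‖x‖ := norm_pos_iff.mpr hx
    have hFabs : ∀ κ : ℝ, 0 < κ → -1 < κ - α →
        |∫ s in Set.Ioi (0:ℝ), s ^ (-α) * Real.exp (-c₅ * ‖x‖ ^ 2 / s) *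
            (Real.exp (-c₆ * s ^ 2 / t) / Real.sqrt (π * t / (4 * c₆)))|
          ≤ ((κ / c₅) ^ κ * c₆ ^ (-(κ - α + 1) / 2) * (1 / 2) *
              Real.Gamma ((κ - α + 1) / 2) * (2 * Real.sqrt c₆ / Real.sqrt π)) *
            t ^ ((κ - α) / 2) * ‖x‖ ^ (-(2 * κ)) := by
      intro κ hκ0 hκγ
      have habs : |∫ s in Set.Ioi (0:ℝ), s ^ (-α) * Real.exp (-c₅ * ‖x‖ ^ 2 / s) *
            (Real.exp (-c₆ * s ^ 2 / t) / Real.sqrt (π * t / (4 * c₆)))|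
          ≤ ∫ s in Set.Ioi (0:ℝ), s ^ (-α) * Real.exp (-c₅ * ‖x‖ ^ 2 / s) *
            (Real.exp (-c₆ * s ^ 2 / t) / Real.sqrt (π * t / (4 * c₆))) := by
        rw [← Real.norm_eq_abs]
        refine (MeasureTheory.norm_integral_le_integral_norm _).trans (le_of_eq ?_)
        refine MeasureTheory.setIntegral_congr_fun measurableSet_Ioi fun s hs => ?_
        have hs' : (0:ℝ) < s := hs
        rw [Real.norm_eq_abs, abs_of_nonneg (by positivity)]
      refine habs.trans ?_
      have := aux_ptwise d hc₅ hc₆ hκ0 (by rw [hαdef] at hκγ; exact hκγ) ht0 hr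
      rw [← hαdef] at this
      exact this
    by_cases hxR : ‖x‖ ≤ R
    · have hb := hFabs κ₁ hκ₁0 hγ₁
      have : |∫ s in Set.Ioi (0:ℝ), s ^ (-α) * Real.exp (-c₅ * ‖x‖ ^ 2 / s) *
            (Real.exp (-c₆ * s ^ 2 / t) / Real.sqrt (π * t / (4 * c₆)))| ^ q
          ≤ C₁ * ‖x‖ ^ (-(2*κ₁)*q) := by
        calc |_| ^ q ≤ ((B₁ * t ^ ((κ₁ - α)/2)) * ‖x‖ ^ (-(2 * κ₁))) ^ q := by
              refine Real.rpow_le_rpow (abs_nonneg _) ?_ hq0.le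
              calc |_| ≤ B₁ * t ^ ((κ₁ - α)/2) * ‖x‖ ^ (-(2 * κ₁)) := by
                    rw [hB₁def]; exact hb
                _ = (B₁ * t ^ ((κ₁ - α)/2)) * ‖x‖ ^ (-(2 * κ₁)) := by ring
          _ = C₁ * ‖x‖ ^ (-(2*κ₁)*q) := by
              rw [Real.mul_rpow (by positivity) (Real.rpow_nonneg (norm_nonneg x) _),
                ← Real.rpow_mul (norm_nonneg x), hC₁def]
      refine this.trans (le_of_eq ?_)
      simp only [hgdef, if_pos hxR]
    · have hb := hFabs ((d:ℝ)) hkd0 hγ₂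
      have : |∫ s in Set.Ioi (0:ℝ), s ^ (-α) * Real.exp (-c₅ * ‖x‖ ^ 2 / s) *
            (Real.exp (-c₆ * s ^ 2 / t) / Real.sqrt (π * t / (4 * c₆)))| ^ q
          ≤ C₂ * ‖x‖ ^ (-(2*((d:ℝ)))*q) := by
        calc |_| ^ q ≤ ((B₂ * t ^ ((((d:ℝ)) - α)/2)) * ‖x‖ ^ (-(2 * ((d:ℝ))))) ^ q := by
              refine Real.rpow_le_rpow (abs_nonneg _) ?_ hq0.le
              calc |_| ≤ B₂ * t ^ ((((d:ℝ)) - α)/2) * ‖x‖ ^ (-(2 * ((d:ℝ)))) := by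
                    rw [hB₂def]; exact hb
                _ = (B₂ * t ^ ((((d:ℝ)) - α)/2)) * ‖x‖ ^ (-(2 * ((d:ℝ)))) := by ring
          _ = C₂ * ‖x‖ ^ (-(2*((d:ℝ)))*q) := by
              rw [Real.mul_rpow (by positivity) (Real.rpow_nonneg (norm_nonneg x) _),
                ← Real.rpow_mul (norm_nonneg x), hC₂def]
      refine this.trans (le_of_eq ?_)
      simp only [hgdef, if_neg hxR]
  -- main comparison
  have hmono : (∫ x : EuclideanSpace ℝ (Fin d),
      |∫ s in Set.Ioi (0:ℝ),
          s ^ (-α) * Real.exp (-c₅ * ‖x‖ ^ 2 / s) *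
            (Real.exp (-c₆ * s ^ 2 / t) / Real.sqrt (π * t / (4 * c₆)))| ^ q)
      ≤ ∫ x : EuclideanSpace ℝ (Fin d), g ‖x‖ :=
    MeasureTheory.integral_mono_of_nonneg
      (Filter.Eventually.of_forall fun x => Real.rpow_nonneg (abs_nonneg _) _) hInt hae
  have hpolar : ∫ x : EuclideanSpace ℝ (Fin d), g ‖x‖
      = (d:ℝ) * vol * ∫ y in Set.Ioi (0:ℝ), y ^ (d - 1 : ℕ) * g y := by
    rw [MeasureTheory.integral_fun_norm_addHaar (volume : Measure (EuclideanSpace ℝ (Fin d))) g,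
      hdim, nsmul_eq_mul, smul_eq_mul, measureReal_def, hvoldef]
    rw [show ∀ (z : ℝ), (d:ℝ) * ((volume (Metric.ball (0:EuclideanSpace ℝ (Fin d)) 1)).toReal * z)
        = (d:ℝ) * (volume (Metric.ball (0:EuclideanSpace ℝ (Fin d)) 1)).toReal * z
      from fun z => by ring]
    simp only [smul_eq_mul]
  have hvalK : (d:ℝ) * vol * ∫ y in Set.Ioi (0:ℝ), y ^ (d - 1 : ℕ) * g y = K * t ^ Etot := by
    rw [hval]
    have e₁ : C₁ * (R ^ (a₁+1) / (a₁+1)) = B₁ ^ q / (a₁ + 1) * t ^ Etot := by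
      have h1 : C₁ = B₁ ^ q * t ^ ((κ₁ - α)/2 * q) := by
        rw [hC₁def, Real.mul_rpow hB₁.le htp1.le, ← Real.rpow_mul ht0.le]
      have h2 : R ^ (a₁+1) = t ^ ((1:ℝ)/4 * (a₁+1)) := by
        rw [hRdef, ← Real.rpow_mul ht0.le]
      have h3 : t ^ ((κ₁ - α)/2 * q) * t ^ ((1:ℝ)/4 * (a₁+1)) = t ^ Etot := by
        rw [← Real.rpow_add ht0]
        congr 1
        rw [hEtotdef, ha₁def, hαdef]
        ring
      calc C₁ * (R ^ (a₁+1) / (a₁+1))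
          = B₁ ^ q * (t ^ ((κ₁ - α)/2 * q) * t ^ ((1:ℝ)/4 * (a₁+1))) / (a₁+1) := by
            rw [h1, h2]; ring
        _ = B₁ ^ q / (a₁ + 1) * t ^ Etot := by rw [h3]; ring
    have e₂ : C₂ * (R ^ (a₂+1) / (-(a₂+1))) = B₂ ^ q / (-(a₂ + 1)) * t ^ Etot := by
      have h1 : C₂ = B₂ ^ q * t ^ (((d:ℝ) - α)/2 * q) := by
        rw [hC₂def, Real.mul_rpow hB₂.le htp2.le, ← Real.rpow_mul ht0.le]
      have h2 : R ^ (a₂+1) = t ^ ((1:ℝ)/4 * (a₂+1)) := by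
        rw [hRdef, ← Real.rpow_mul ht0.le]
      have h3 : t ^ (((d:ℝ) - α)/2 * q) * t ^ ((1:ℝ)/4 * (a₂+1)) = t ^ Etot := by
        rw [← Real.rpow_add ht0]
        congr 1
        rw [hEtotdef, ha₂def, hαdef]
        ring
      calc C₂ * (R ^ (a₂+1) / (-(a₂+1)))
          = B₂ ^ q * (t ^ (((d:ℝ) - α)/2 * q) * t ^ ((1:ℝ)/4 * (a₂+1))) / (-(a₂+1)) := by
            rw [h1, h2]; ring
        _ = B₂ ^ q / (-(a₂ + 1)) * t ^ Etot := by rw [h3]; ring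
    rw [e₁, e₂, hKdef]
    ring
  -- conclusion
  calc (∫ x : EuclideanSpace ℝ (Fin d),
      |∫ s in Set.Ioi (0:ℝ),
          s ^ (-α) * Real.exp (-c₅ * ‖x‖ ^ 2 / s) *
            (Real.exp (-c₆ * s ^ 2 / t) / Real.sqrt (π * t / (4 * c₆)))| ^ q) ^ (1/q)
      ≤ (K * t ^ Etot) ^ (1/q) := by
        refine Real.rpow_le_rpow ?_ ?_ (by positivity)
        · exact MeasureTheory.integral_nonneg fun x => Real.rpow_nonneg (abs_nonneg _) _
        · rw [← hvalK, ← hpolar]; exact hmono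
    _ = K ^ (1/q) * t ^ (-(((d : ℝ) * (q - 1) + q) / (4 * q))) := by
        rw [Real.mul_rpow hK (Real.rpow_nonneg ht0.le _), ← Real.rpow_mul ht0.le]
        congr 1
        rw [hEtotdef, hαdef]
        field_simp
        ring
    _ ≤ (K ^ (1/q) + 1) * t ^ (-(((d : ℝ) * (q - 1) + q) / (4 * q))) := by
        have : (0:ℝ) ≤ t ^ (-(((d : ℝ) * (q - 1) + q) / (4 * q))) :=
          Real.rpow_nonneg ht0.le _
        nlinarith [Real.rpow_nonneg hK (1/q)]
end

section
/- Time-difference estimate: let 0 ≤ s < t ≤ T, and suppose a family K(θ) in L^q(ℝ^d) is differentiable in θ with ‖∂_θ K(θ)‖_q ≤ C θ^{-1-β} for θ ∈ (0,T], where β = (2p+d)/(8p). Then for 0 < r < s: ‖K(t-r) − K(s-r)‖_q ≤ C ∫_s^t (θ-r)^{-1-β} dθ, and consequently for γ > 8p/(6p-d), d < 6p, and any ϱ < 1 − β − 1/γ, ∫₀^s ‖K(t-r) − K(s-r)‖_q ‖v(r)‖_p dr ≤ C (t-s)^ϱ ( ∫₀^t ‖v(r)‖_p^γ dr )^{1/γ}.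 -/
open Real MeasureTheory

private lemma aux_int {β r s t : ℝ} (hβ : 0 < β) (hr : 0 < r) (hrs : r < s) (hst : s ≤ t) :
    ∫ θ in Set.Ioc s t, (θ - r) ^ (-1 - β) = ((s - r) ^ (-β) - (t - r) ^ (-β)) / β := by
  have h0 : (0:ℝ) ∉ Set.uIcc (s - r) (t - r) :=
    Set.notMem_uIcc_of_lt (by linarith) (by linarith)
  have hne : -1 - β ≠ -1 := by intro h; nlinarith
  rw [← intervalIntegral.integral_of_le hst,
    show (fun θ : ℝ => (θ - r) ^ (-1 - β)) = fun θ : ℝ => ((θ - r) ^ (-1 - β)) from rfl]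
  rw [intervalIntegral.integral_comp_sub_right (fun u => u ^ (-1 - β)) r,
    integral_rpow (Or.inr ⟨hne, h0⟩)]
  have h1 : -1 - β + 1 = -β := by ring
  rw [h1, div_neg, ← neg_div, neg_sub]

private lemma aux_norm {E : Type*} [NormedAddCommGroup E] [NormedSpace ℝ E]
    {K K' : ℝ → E} {T C β : ℝ}
    (hderiv : ∀ θ ∈ Set.Ioc (0:ℝ) T, HasDerivAt K (K' θ) θ)
    (hbound : ∀ θ ∈ Set.Ioc (0:ℝ) T, ‖K' θ‖ ≤ C * θ ^ (-1 - β))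
    {a b : ℝ} (ha : 0 < a) (hab : a ≤ b) (hbT : b ≤ T) (hβ : 0 < β) :
    ‖K b - K a‖ ≤ C * ((a ^ (-β) - b ^ (-β)) / β) := by
  have hmem : ∀ x ∈ Set.Icc a b, x ∈ Set.Ioc (0:ℝ) T := fun x hx =>
    ⟨lt_of_lt_of_le ha hx.1, le_trans hx.2 hbT⟩
  have hB : ∀ x ∈ Set.Icc a b, HasDerivAt (fun θ : ℝ => C * ((a ^ (-β) - θ ^ (-β)) / β))
      (C * x ^ (-1 - β)) x := by
    intro x hx
    have hx0 : x ≠ 0 := (lt_of_lt_of_le ha hx.1).ne'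
    have h1 : HasDerivAt (fun θ : ℝ => θ ^ (-β)) (-β * x ^ (-β - 1)) x :=
      Real.hasDerivAt_rpow_const (Or.inl hx0)
    have h2 := (((hasDerivAt_const x (a ^ (-β))).sub h1).div_const β).const_mul C
    refine h2.congr_deriv ?_
    have h3 : -1 - β = -β - 1 := by ring
    rw [h3]
    field_simp
    ring
  have key := image_norm_le_of_norm_deriv_right_le_deriv_boundary'
    (f := fun θ => K θ - K a) (f' := K')
    (a := a) (b := b)
    (fun x hx => ((hderiv x (hmem x hx)).continuousAt.continuousWithinAt).sub
      continuousWithinAt_const)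
    (fun x hx => ((hderiv x (hmem x (Set.mem_Icc_of_Ico hx))).hasDerivWithinAt).sub_const _)
    (B := fun θ => C * ((a ^ (-β) - θ ^ (-β)) / β)) (B' := fun θ => C * θ ^ (-1 - β))
    (by simp)
    (fun x hx => (hB x hx).continuousAt.continuousWithinAt)
    (fun x hx => (hB x (Set.mem_Icc_of_Ico hx)).hasDerivWithinAt)
    (fun x hx => hbound x (hmem x (Set.mem_Icc_of_Ico hx)))
  simpa using key (Set.right_mem_Icc.2 hab)

private lemma aux_mid {β a b : ℝ} (hβ : 0 < β) (ha : 0 < a) (hab : a ≤ b) :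
    (a ^ (-β) - b ^ (-β)) / β ≤ (b - a) * a ^ (-1 - β) := by
  have h0 : (0:ℝ) ∉ Set.uIcc a b := Set.notMem_uIcc_of_lt ha (lt_of_lt_of_le ha hab)
  have hne : -1 - β ≠ -1 := by intro h; nlinarith
  have hi : ∫ u in a..b, u ^ (-1 - β) = (a ^ (-β) - b ^ (-β)) / β := by
    rw [integral_rpow (Or.inr ⟨hne, h0⟩)]
    have h1 : -1 - β + 1 = -β := by ring
    rw [h1, div_neg, ← neg_div, neg_sub]
  rw [← hi]
  have hcont : ContinuousOn (fun u : ℝ => u ^ (-1 - β)) (Set.uIcc a b) := by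
    apply ContinuousOn.rpow_const continuousOn_id
    intro x hx
    exact Or.inl (fun hx0 => h0 (hx0 ▸ hx))
  have hint : IntervalIntegrable (fun u : ℝ => u ^ (-1 - β)) volume a b :=
    hcont.intervalIntegrable
  calc ∫ u in a..b, u ^ (-1 - β) ≤ ∫ _u in a..b, a ^ (-1 - β) :=
      intervalIntegral.integral_mono_on hab hint intervalIntegrable_const
        (fun x hx => Real.rpow_le_rpow_of_nonpos ha hx.1 (by linarith))
    _ = (b - a) * a ^ (-1 - β) := by
      rw [intervalIntegral.integral_const, smul_eq_mul]

private lemma aux_interp {β ϱ a b : ℝ} (hβ : 0 < β) (hϱ0 : 0 < ϱ) (hϱ1 : ϱ ≤ 1)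
    (ha : 0 < a) (hab : a ≤ b) :
    (a ^ (-β) - b ^ (-β)) / β ≤ (b - a) ^ ϱ * a ^ (-β - ϱ) * β ^ (ϱ - 1) := by
  set V := (a ^ (-β) - b ^ (-β)) / β with hV
  have hVnn : 0 ≤ V := by
    apply div_nonneg _ hβ.le
    have := Real.rpow_le_rpow_of_nonpos ha hab (neg_nonpos.2 hβ.le)
    linarith
  have h2 : V ≤ (b - a) * a ^ (-1 - β) := aux_mid hβ ha hab
  have h1 : V ≤ a ^ (-β) / β := by
    rw [hV]
    gcongr
    exact sub_le_self _ (Real.rpow_nonneg (le_trans ha.le hab) _)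
  have hba : (0:ℝ) ≤ b - a := by linarith
  have hA : (0:ℝ) ≤ (b - a) * a ^ (-1 - β) := by positivity
  have hrhs : ((b - a) * a ^ (-1 - β)) ^ ϱ * (a ^ (-β) / β) ^ (1 - ϱ)
      = (b - a) ^ ϱ * a ^ (-β - ϱ) * β ^ (ϱ - 1) := by
    rw [Real.mul_rpow hba (Real.rpow_nonneg ha.le _),
      Real.div_rpow (Real.rpow_nonneg ha.le _) hβ.le,
      ← Real.rpow_mul ha.le, ← Real.rpow_mul ha.le]
    rw [div_eq_mul_inv, ← Real.rpow_neg hβ.le, show -(1 - ϱ) = ϱ - 1 by ring]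
    have hmerge : a ^ ((-1 - β) * ϱ) * a ^ (-β * (1 - ϱ)) = a ^ (-β - ϱ) := by
      rw [← Real.rpow_add ha]; ring_nf
    calc (b - a) ^ ϱ * a ^ ((-1 - β) * ϱ) * (a ^ (-β * (1 - ϱ)) * β ^ (ϱ - 1))
        = (b - a) ^ ϱ * (a ^ ((-1 - β) * ϱ) * a ^ (-β * (1 - ϱ))) * β ^ (ϱ - 1) := by ring
      _ = (b - a) ^ ϱ * a ^ (-β - ϱ) * β ^ (ϱ - 1) := by rw [hmerge]
  rcases eq_or_lt_of_le hVnn with h0 | hVpos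
  · rw [← h0, ← hrhs]; positivity
  · have key : V ≤ ((b - a) * a ^ (-1 - β)) ^ ϱ * (a ^ (-β) / β) ^ (1 - ϱ) := by
      calc V = V ^ ϱ * V ^ (1 - ϱ) := by
            rw [← Real.rpow_add hVpos]; norm_num
        _ ≤ ((b - a) * a ^ (-1 - β)) ^ ϱ * (a ^ (-β) / β) ^ (1 - ϱ) :=
            mul_le_mul (Real.rpow_le_rpow hVnn h2 hϱ0.le)
              (Real.rpow_le_rpow hVnn h1 (by linarith)) (Real.rpow_nonneg hVnn _)
              (Real.rpow_nonneg hA _)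
    rw [← hrhs]
    exact key


/-- Time-difference estimate for a differentiable family `K(θ)` in `L^q(ℝ^d)` with
`‖∂_θ K(θ)‖_q ≤ C θ^{-1-β}`, `β = (2p+d)/(8p)`. -/
theorem stmt11 (d : ℕ) (T p C : ℝ) (hT : 0 < T) (hp : 1 ≤ p) (hd : (d : ℝ) < 6 * p)
    (hC : 0 < C) [Fact (1 ≤ ENNReal.ofReal (2 * p / (2 * p - 1)))]
    (K K' : ℝ → Lp ℝ (ENNReal.ofReal (2 * p / (2 * p - 1)))
          (volume : Measure (EuclideanSpace ℝ (Fin d))))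
    (hderiv : ∀ θ ∈ Set.Ioc (0:ℝ) T, HasDerivAt K (K' θ) θ)
    (hbound : ∀ θ ∈ Set.Ioc (0:ℝ) T,
      ‖K' θ‖ ≤ C * θ ^ (-1 - (2 * p + (d : ℝ)) / (8 * p))) :
    (∀ r s t : ℝ, 0 < r → r < s → s < t → t ≤ T →
      ‖K (t - r) - K (s - r)‖
        ≤ C * ∫ θ in Set.Ioc s t, (θ - r) ^ (-1 - (2 * p + (d : ℝ)) / (8 * p))) ∧
    (∀ γ ϱ : ℝ, 8 * p / (6 * p - (d : ℝ)) < γ →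
      ϱ < 1 - (2 * p + (d : ℝ)) / (8 * p) - 1 / γ →
      ∃ C' > (0:ℝ),
        ∀ v : ℝ → Lp ℝ (ENNReal.ofReal p) (volume : Measure (EuclideanSpace ℝ (Fin d))),
          (Measurable fun r => ‖v r‖) →
          IntegrableOn (fun r => ‖v r‖ ^ γ) (Set.Ioc (0:ℝ) T) →
          ∀ s t : ℝ, 0 < s → s < t → t ≤ T →
            ∫ r in Set.Ioc (0:ℝ) s, ‖K (t - r) - K (s - r)‖ * ‖v r‖
              ≤ C' * (t - s) ^ ϱ * (∫ r in Set.Ioc (0:ℝ) t, ‖v r‖ ^ γ) ^ (1 / γ)) := by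
  have hp0 : (0:ℝ) < p := lt_of_lt_of_le one_pos hp
  set β : ℝ := (2 * p + (d : ℝ)) / (8 * p) with hβdef
  clear_value β
  have hd0 : (0:ℝ) ≤ (d:ℝ) := Nat.cast_nonneg d
  have hβpos : 0 < β := by rw [hβdef]; positivity
  constructor
  · intro r s t hr hrs hst htT
    rw [aux_int hβpos hr hrs hst.le]
    exact aux_norm hderiv hbound (by linarith) (by linarith) (by linarith) hβpos
  · intro γ ϱ hγ hϱlt
    have h6 : (0:ℝ) < 6 * p - d := by linarith
    have hγ1 : 1 < γ := lt_trans ((one_lt_div h6).2 (by nlinarith)) hγ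
    have hγ0 : 0 < γ := lt_trans one_pos hγ1
    set ρm : ℝ := 1 - β - 1/γ with hρm
    clear_value ρm
    have hρm_pos : 0 < ρm := by
      have h1γ : 1/γ < (6*p - d)/(8*p) := by
        rw [div_lt_div_iff₀ hγ0 (by positivity)]
        have h8 := (div_lt_iff₀ h6).1 hγ
        nlinarith
      have hbeq : 1 - β = (6*p - d)/(8*p) := by
        rw [hβdef]; field_simp; ring
      rw [hρm]
      linarith [hbeq]
    set ϱ' : ℝ := max ϱ (ρm/2) with hϱ'def
    have hϱ'pos : 0 < ϱ' := lt_of_lt_of_le (show (0:ℝ) < ρm/2 by linarith) (le_max_right _ _)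
    have hϱ'ltρ : ϱ' < ρm := max_lt hϱlt (show ρm/2 < ρm by linarith)
    have hϱϱ' : ϱ ≤ ϱ' := le_max_left _ _
    clear_value ϱ'
    have hγinvpos : 0 < 1/γ := by positivity
    have hϱ'le1 : ϱ' ≤ 1 := by
      have : ρm ≤ 1 := by rw [hρm]; linarith
      linarith
    set γ' : ℝ := γ/(γ-1) with hγ'def
    have hconj : γ'.HolderConjugate γ := (Real.HolderConjugate.conjExponent hγ1).symm
    have hγ'1 : 1 < γ' := hconj.lt
    have hγ'0 : 0 < γ' := hconj.pos
    clear_value γ'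
    set e : ℝ := (-β - ϱ') * γ' with hedef
    clear_value e
    have hinv : γ'⁻¹ + γ⁻¹ = 1 := hconj.inv_add_inv_eq_one
    have he : -1 < e := by
      have h1 : β + ϱ' < 1/γ' := by
        rw [one_div]
        have h2 : (γ':ℝ)⁻¹ = 1 - γ⁻¹ := by linarith
        rw [h2, hρm] at *
        rw [one_div] at hϱ'ltρ
        linarith
      have h2 : (β + ϱ') * γ' < 1 := by
        have h3 := mul_lt_mul_of_pos_right h1 hγ'0
        rwa [one_div, inv_mul_cancel₀ (ne_of_gt hγ'0)] at h3
      rw [hedef]; nlinarith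
    have he1 : 0 < e + 1 := by linarith
    refine ⟨C * β ^ (ϱ' - 1) * (T ^ (e+1) / (e+1)) ^ (1/γ') * T ^ (ϱ' - ϱ), by positivity, ?_⟩
    intro v hv hvint s t hs hst htT
    have hsT : s ≤ T := le_trans hst.le htT
    have hnv : ∀ r, (0:ℝ) ≤ ‖v r‖ := fun r => by
      rw [MeasureTheory.Lp.norm_def]; exact ENNReal.toReal_nonneg
    have hts0 : 0 < t - s := by linarith
    set w : ℝ → ℝ := fun r => (s - r) ^ (-β - ϱ') with hwdef
    set c₂ : ℝ := C * β ^ (ϱ' - 1) * (t - s) ^ ϱ' with hc₂def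
    have hc₂nn : 0 ≤ c₂ := by positivity
    -- pointwise bound
    have hptw : ∀ r ∈ Set.Ioo (0:ℝ) s,
        ‖K (t - r) - K (s - r)‖ * ‖v r‖ ≤ c₂ * (w r * ‖v r‖) := by
      intro r hr
      have hsr : 0 < s - r := by linarith [hr.2]
      have h1 : ‖K (t - r) - K (s - r)‖ ≤ C * (((s-r) ^ (-β) - (t-r) ^ (-β)) / β) :=
        aux_norm hderiv hbound hsr (by linarith) (by linarith [hr.1]) hβpos
      have h2 := aux_interp hβpos hϱ'pos hϱ'le1 hsr (show s - r ≤ t - r by linarith)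
      rw [show t - r - (s - r) = t - s by ring] at h2
      have h3 : ‖K (t - r) - K (s - r)‖ ≤ c₂ * w r := by
        calc ‖K (t - r) - K (s - r)‖ ≤ C * (((s-r) ^ (-β) - (t-r) ^ (-β)) / β) := h1
          _ ≤ C * ((t-s) ^ ϱ' * (s-r) ^ (-β - ϱ') * β ^ (ϱ' - 1)) := by
              exact mul_le_mul_of_nonneg_left h2 hC.le
          _ = c₂ * w r := by rw [hc₂def, hwdef]; ring
      calc ‖K (t - r) - K (s - r)‖ * ‖v r‖ ≤ (c₂ * w r) * ‖v r‖ :=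
            mul_le_mul_of_nonneg_right h3 (hnv r)
        _ = c₂ * (w r * ‖v r‖) := by ring
    -- weight integrability and value
    have hw_ii : IntervalIntegrable (fun x : ℝ => (s - x) ^ e) volume 0 s := by
      have h := (intervalIntegral.intervalIntegrable_rpow' he (a := 0) (b := s)).comp_sub_left s
      rw [sub_zero, sub_self] at h
      exact h.symm
    have hw_ioo : IntegrableOn (fun x : ℝ => (s - x) ^ e) (Set.Ioo 0 s) := by
      rw [← intervalIntegrable_iff_integrableOn_Ioo_of_le hs.le]
      exact hw_ii
    have hw_val : ∫ r in Set.Ioo (0:ℝ) s, (s - r) ^ e = s ^ (e+1) / (e+1) := by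
      rw [← integral_Ioc_eq_integral_Ioo, ← intervalIntegral.integral_of_le hs.le,
        intervalIntegral.integral_comp_sub_left (fun u : ℝ => u ^ e) s, sub_self, sub_zero,
        integral_rpow (Or.inl he), Real.zero_rpow (by linarith : e + 1 ≠ 0)]
      ring
    set μs := volume.restrict (Set.Ioo (0:ℝ) s) with hμs
    have hq0 : ENNReal.ofReal γ ≠ 0 := by
      simp only [ne_eq, ENNReal.ofReal_eq_zero, not_le]; linarith
    have hq0' : ENNReal.ofReal γ' ≠ 0 := by
      simp only [ne_eq, ENNReal.ofReal_eq_zero, not_le]; linarith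
    have hvint_ioo : Integrable (fun r => ‖v r‖ ^ γ) μs :=
      hvint.mono_set (fun x hx => ⟨hx.1, le_trans hx.2.le hsT⟩)
    have hvmem : MemLp (fun r => ‖v r‖) (ENNReal.ofReal γ) μs := by
      have h1 : MemLp (fun r => ‖‖v r‖‖ ^ (ENNReal.ofReal γ).toReal)
          (ENNReal.ofReal γ / ENNReal.ofReal γ) μs := by
        rw [ENNReal.div_self hq0 ENNReal.ofReal_ne_top, ENNReal.toReal_ofReal hγ0.le,
          memLp_one_iff_integrable]
        have hfe : (fun r => ‖‖v r‖‖ ^ γ) = fun r => ‖v r‖ ^ γ := by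
          funext r; rw [Real.norm_eq_abs, abs_of_nonneg (hnv r)]
        rw [hfe]
        exact hvint_ioo
      exact (memLp_norm_rpow_iff hv.aestronglyMeasurable hq0 ENNReal.ofReal_ne_top).1 h1
    have hwcont : ContinuousOn w (Set.Ioo (0:ℝ) s) := by
      apply ContinuousOn.rpow_const ((continuous_const.sub continuous_id).continuousOn)
      intro x hx
      exact Or.inl (ne_of_gt (by show (0:ℝ) < s - x; linarith [hx.2]))
    have hwsm : AEStronglyMeasurable w μs := hwcont.aestronglyMeasurable measurableSet_Ioo
    have hw_rpow_int : Integrable (fun r => ‖w r‖ ^ γ') μs := by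
      apply hw_ioo.congr
      rw [Filter.EventuallyEq, ae_restrict_iff' measurableSet_Ioo]
      refine Filter.Eventually.of_forall fun r hr => ?_
      have hsr : (0:ℝ) ≤ s - r := by linarith [hr.2]
      rw [hwdef]
      simp only
      rw [Real.norm_eq_abs, abs_of_nonneg (Real.rpow_nonneg hsr _),
        ← Real.rpow_mul hsr, ← hedef]
    have hwmem : MemLp w (ENNReal.ofReal γ') μs := by
      have h1 : MemLp (fun r => ‖w r‖ ^ (ENNReal.ofReal γ').toReal)
          (ENNReal.ofReal γ' / ENNReal.ofReal γ') μs := by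
        rw [ENNReal.div_self hq0' ENNReal.ofReal_ne_top, ENNReal.toReal_ofReal hγ'0.le,
          memLp_one_iff_integrable]
        exact hw_rpow_int
      exact (memLp_norm_rpow_iff hwsm hq0' ENNReal.ofReal_ne_top).1 h1
    have hw_nonneg : (0:ℝ→ℝ) ≤ᵐ[μs] w := by
      rw [hμs]
      refine (ae_restrict_iff' measurableSet_Ioo).2 (Filter.Eventually.of_forall fun r hr => ?_)
      have hsr : (0:ℝ) ≤ s - r := by linarith [hr.2]
      exact Real.rpow_nonneg hsr _
    have hg_nonneg : (0:ℝ→ℝ) ≤ᵐ[μs] (fun r => ‖v r‖) :=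
      Filter.Eventually.of_forall fun r => hnv r
    have hold := MeasureTheory.integral_mul_le_Lp_mul_Lq_of_nonneg hconj hw_nonneg hg_nonneg
      hwmem hvmem
    have hval : ∫ a, w a ^ γ' ∂μs = s ^ (e+1) / (e+1) := by
      rw [hμs, ← hw_val]
      apply setIntegral_congr_fun measurableSet_Ioo
      intro r hr
      have hsr : (0:ℝ) ≤ s - r := by linarith [hr.2]
      simp only [hwdef]
      rw [← Real.rpow_mul hsr, ← hedef]
    have hIw : 0 ≤ ∫ a, w a ^ γ' ∂μs := by rw [hval]; positivity
    have hfac1 : (∫ a, w a ^ γ' ∂μs) ^ (1/γ') ≤ (T ^ (e+1) / (e+1)) ^ (1/γ') := by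
      apply Real.rpow_le_rpow hIw _ (by positivity)
      rw [hval]
      gcongr
    have hInt_t : IntegrableOn (fun r => ‖v r‖ ^ γ) (Set.Ioc (0:ℝ) t) :=
      hvint.mono_set (Set.Ioc_subset_Ioc_right htT)
    have hX : (0:ℝ) ≤ (∫ r in Set.Ioc (0:ℝ) t, ‖v r‖ ^ γ) ^ (1/γ) :=
      Real.rpow_nonneg (integral_nonneg fun r => Real.rpow_nonneg (hnv r) _) _
    have hfac2 : (∫ a, ‖v a‖ ^ γ ∂μs) ^ (1/γ)
        ≤ (∫ r in Set.Ioc (0:ℝ) t, ‖v r‖ ^ γ) ^ (1/γ) := by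
      apply Real.rpow_le_rpow (integral_nonneg fun r => Real.rpow_nonneg (hnv r) _) _
        hγinvpos.le
      rw [hμs]
      apply setIntegral_mono_set hInt_t
        (Filter.Eventually.of_forall fun r => Real.rpow_nonneg (hnv r) _)
      exact (show Set.Ioo (0:ℝ) s ⊆ Set.Ioc (0:ℝ) t from
        fun x hx => ⟨hx.1, le_trans hx.2.le hst.le⟩).eventuallyLE
    have hone : (1:ENNReal)/1 = 1/ENNReal.ofReal γ' + 1/ENNReal.ofReal γ := by
      rw [one_div, one_div, one_div, ← ENNReal.ofReal_inv_of_pos hγ'0,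
        ← ENNReal.ofReal_inv_of_pos hγ0,
        ← ENNReal.ofReal_add (inv_nonneg.2 hγ'0.le) (inv_nonneg.2 hγ0.le), hinv,
        ENNReal.ofReal_one, inv_one]
    have hprod : Integrable (fun r => w r * ‖v r‖) μs := by
      haveI : ENNReal.HolderTriple (ENNReal.ofReal γ') (ENNReal.ofReal γ) 1 :=
        ⟨by simpa [one_div] using hone.symm⟩
      have h := MeasureTheory.MemLp.smul (r := 1) hvmem hwmem
      rw [memLp_one_iff_integrable] at h
      exact h
    have hKnn : ∀ r, (0:ℝ) ≤ ‖K (t - r) - K (s - r)‖ := fun r => by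
      rw [MeasureTheory.Lp.norm_def]; exact ENNReal.toReal_nonneg
    have hts : (t-s) ^ ϱ' ≤ T ^ (ϱ'-ϱ) * (t-s) ^ ϱ := by
      have h1 : (t-s) ^ ϱ' = (t-s) ^ (ϱ'-ϱ) * (t-s) ^ ϱ := by
        rw [← Real.rpow_add hts0]; ring_nf
      rw [h1]
      exact mul_le_mul_of_nonneg_right
        (Real.rpow_le_rpow hts0.le (by linarith) (by linarith))
        (Real.rpow_nonneg hts0.le _)
    calc ∫ r in Set.Ioc (0:ℝ) s, ‖K (t - r) - K (s - r)‖ * ‖v r‖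
        = ∫ r in Set.Ioo (0:ℝ) s, ‖K (t - r) - K (s - r)‖ * ‖v r‖ :=
          integral_Ioc_eq_integral_Ioo
      _ ≤ ∫ r in Set.Ioo (0:ℝ) s, c₂ * (w r * ‖v r‖) := by
          apply integral_mono_of_nonneg
          · exact Filter.Eventually.of_forall fun r => mul_nonneg (hKnn r) (hnv r)
          · exact hprod.const_mul c₂
          · exact (ae_restrict_iff' measurableSet_Ioo).2
              (Filter.Eventually.of_forall fun r hr => hptw r hr)
      _ = c₂ * ∫ r in Set.Ioo (0:ℝ) s, w r * ‖v r‖ := integral_const_mul c₂ _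
      _ ≤ c₂ * ((T ^ (e+1) / (e+1)) ^ (1/γ')
            * (∫ r in Set.Ioc (0:ℝ) t, ‖v r‖ ^ γ) ^ (1/γ)) := by
          apply mul_le_mul_of_nonneg_left _ hc₂nn
          exact hold.trans (mul_le_mul hfac1 hfac2
            (Real.rpow_nonneg (integral_nonneg fun r => Real.rpow_nonneg (hnv r) _) _)
            (by positivity))
      _ = (C * β ^ (ϱ'-1) * (T ^ (e+1) / (e+1)) ^ (1/γ'))
            * ((t-s) ^ ϱ' * (∫ r in Set.Ioc (0:ℝ) t, ‖v r‖ ^ γ) ^ (1/γ)) := by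
          rw [hc₂def]; ring
      _ ≤ (C * β ^ (ϱ'-1) * (T ^ (e+1) / (e+1)) ^ (1/γ'))
            * ((T ^ (ϱ'-ϱ) * (t-s) ^ ϱ)
              * (∫ r in Set.Ioc (0:ℝ) t, ‖v r‖ ^ γ) ^ (1/γ)) := by
          exact mul_le_mul_of_nonneg_left
            (mul_le_mul_of_nonneg_right hts hX) (by positivity)
      _ = C * β ^ (ϱ' - 1) * (T ^ (e+1) / (e+1)) ^ (1/γ') * T ^ (ϱ' - ϱ) * (t - s) ^ ϱ
            * (∫ r in Set.Ioc (0:ℝ) t, ‖v r‖ ^ γ) ^ (1/γ) := by ring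
end
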